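/- Let A be an m×n real matrix and x ∈ ℝ^n a vector with x ≥ 0 entrywise and x ≠ 0. Then A x > 0 entrywise if and only if there exist an entrywise nonnegative n×n matrix X and an entrywise positive m×n matrix Y such that X is invertible, X⁻¹ x ≥ 0 entrywise, and A = Y X⁻¹. -/

import Mathlib

open Matrix

/-- Factorization lemma for semipositivity: a nonnegative nonzero vector `x` is a
semipositivity vector of `A` (i.e. `A x > 0` entrywise) iff `A = Y X⁻¹` for some
nonnegative invertible `X` having `x` as a seminonnegativity vector of `X⁻¹`, and
some positive `Y`. -/
theorem stmt11 (m n : ℕ) (A : Matrix (Fin m) (Fin n) ℝ) (x : Fin n → ℝ)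
    (hx : ∀ i, 0 ≤ x i) (hx0 : x ≠ 0) :
    (∀ i, 0 < (A.mulVec x) i) ↔
      ∃ (X : Matrix (Fin n) (Fin n) ℝ) (Y : Matrix (Fin m) (Fin n) ℝ),
        (∀ i j, 0 ≤ X i j) ∧ (∀ i j, 0 < Y i j) ∧ IsUnit X ∧
        (∀ i, 0 ≤ (X⁻¹.mulVec x) i) ∧ A = Y * X⁻¹ := by
  constructor
  · intro hAx
    -- sum of x is positive
    set s : ℝ := ∑ j, x j with hs_def
    obtain ⟨j0, hj0⟩ : ∃ j, x j ≠ 0 := Function.ne_iff.mp hx0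
    have hs : 0 < s := Finset.sum_pos' (fun j _ => hx j)
      ⟨j0, Finset.mem_univ _, lt_of_le_of_ne (hx j0) (Ne.symm hj0)⟩
    -- choose small ε
    obtain ⟨ε, hε0, hε⟩ : ∃ ε > (0:ℝ), ∀ i j, ε * |A i j| < (A.mulVec x) i := by
      rcases isEmpty_or_nonempty (Fin m × Fin n) with h | h
      · exact ⟨1, one_pos, fun i j => (h.false (i, j)).elim⟩
      · have hne : (Finset.univ : Finset (Fin m × Fin n)).Nonempty := Finset.univ_nonempty
        set δ : ℝ := Finset.univ.inf' hne
          (fun p : Fin m × Fin n => (A.mulVec x) p.1 / (|A p.1 p.2| + 1)) with hδ_def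
        have hδ0 : 0 < δ := by
          rw [hδ_def, Finset.lt_inf'_iff]
          intro p _
          exact div_pos (hAx p.1) (by positivity)
        refine ⟨δ, hδ0, fun i j => ?_⟩
        have hle : δ ≤ (A.mulVec x) i / (|A i j| + 1) :=
          Finset.inf'_le _ (Finset.mem_univ (i, j))
        have h1 : δ * (|A i j| + 1) ≤ (A.mulVec x) i := by
          rw [le_div_iff₀ (by positivity)] at hle; linarith
        nlinarith [abs_nonneg (A i j)]
    set P : Matrix (Fin n) (Fin n) ℝ := Matrix.of (fun i _ => x i) with hP_def
    set X : Matrix (Fin n) (Fin n) ℝ := ε • 1 + P with hX_def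
    have hεs : ε + s ≠ 0 := by positivity
    set B : Matrix (Fin n) (Fin n) ℝ := ε⁻¹ • (1 - (ε + s)⁻¹ • P) with hB_def
    have hPP : P * P = s • P := by
      ext i j
      simp only [hP_def, Matrix.mul_apply, Matrix.smul_apply, Matrix.of_apply, smul_eq_mul]
      rw [← Finset.mul_sum, ← hs_def, mul_comm]
    have hε' : ε ≠ 0 := ne_of_gt hε0
    have hXB : X * B = 1 := by
      rw [hX_def, hB_def, Matrix.mul_smul, mul_sub, mul_one, Matrix.mul_smul, add_mul,
        Matrix.smul_mul, one_mul, hPP]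
      match_scalars <;> field_simp <;> ring
    have hBX : B * X = 1 := mul_eq_one_comm.mp hXB
    have hXu : IsUnit X := ⟨⟨X, B, hXB, hBX⟩, rfl⟩
    have hXinv : X⁻¹ = B := Matrix.inv_eq_right_inv hXB
    have hXx : X.mulVec x = (ε + s) • x := by
      ext i
      simp only [hX_def, Matrix.add_mulVec, Matrix.smul_mulVec, Matrix.one_mulVec,
        Pi.add_apply, Pi.smul_apply, smul_eq_mul]
      have hP : (P.mulVec x) i = x i * s := by
        simp [hP_def, Matrix.mulVec, dotProduct, ← Finset.mul_sum, ← hs_def]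
      rw [hP]; ring
    have hXc : X.mulVec ((ε + s)⁻¹ • x) = x := by
      rw [Matrix.mulVec_smul, hXx, smul_smul, inv_mul_cancel₀ hεs, one_smul]
    have hBx : B.mulVec x = (ε + s)⁻¹ • x := by
      conv_lhs => rw [← hXc]
      rw [Matrix.mulVec_mulVec, hBX, Matrix.one_mulVec]
    refine ⟨X, A * X, ?_, ?_, hXu, ?_, ?_⟩
    · intro i j
      have h1 : X i j = ε * (if i = j then 1 else 0) + x i := by
        simp [hX_def, hP_def, Matrix.one_apply]
      rw [h1]
      split_ifs <;> nlinarith [hx i]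
    · intro i j
      have hAX : (A * X) i j = ε * A i j + (A.mulVec x) i := by
        have e1 : A * X = ε • A + A * P := by
          rw [hX_def, Matrix.mul_add, Matrix.mul_smul, Matrix.mul_one]
        rw [e1, Matrix.add_apply, Matrix.smul_apply, smul_eq_mul]
        congr 1
      rw [hAX]
      have := hε i j
      have := neg_abs_le (A i j)
      nlinarith
    · intro i
      rw [hXinv, hBx]
      have : (0:ℝ) < ε + s := by positivity
      exact mul_nonneg (by positivity) (hx i)
    · rw [hXinv, Matrix.mul_assoc, hXB, Matrix.mul_one]
  · rintro ⟨X, Y, hXnn, hYpos, hXu, hXinvx, rfl⟩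
    have hdet : IsUnit X.det := (Matrix.isUnit_iff_isUnit_det X).mp hXu
    set u : Fin n → ℝ := X⁻¹.mulVec x with hu_def
    have hXmu : X.mulVec u = x := by
      rw [hu_def, Matrix.mulVec_mulVec, Matrix.mul_nonsing_inv X hdet, Matrix.one_mulVec]
    have hu0 : u ≠ 0 := by
      intro h
      apply hx0
      rw [← hXmu, h, Matrix.mulVec_zero]
    obtain ⟨j, hj⟩ : ∃ j, u j ≠ 0 := Function.ne_iff.mp hu0
    have hju : 0 < u j := lt_of_le_of_ne (hXinvx j) (Ne.symm hj)
    intro i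
    rw [← Matrix.mulVec_mulVec]
    refine Finset.sum_pos' (fun k _ => mul_nonneg (le_of_lt (hYpos i k)) (hXinvx k))
      ⟨j, Finset.mem_univ _, mul_pos (hYpos i j) hju⟩
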